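/- arXiv:1812.06967 — 2 statements merged into one kernel-verified Lean document; each statement's English description precedes it below -/
import Mathlib

section
/- Upper bound on the payoff of any strategy: let p₀ ∈ [0,1], T ≥ 0, and let α : ℝ → ℝ be a measurable function with α(t) ∈ [0,1] for all t. Let p : ℝ → ℝ be differentiable with p(0) = p₀ and p′(t) = −λ·(2α(t) − 1)·p(t)·(1 − p(t)) for all t ∈ [0,T], and define P(t) = p₀·exp(−λ·∫₀ᵗ α(s) ds) + (1 − p₀)·exp(−λ·∫₀ᵗ (1 − α(s)) ds). Then ∫₀ᵀ e^{−ρt}·P(t)·(λ·α(t)·p(t)·u_r^R + λ·(1 − α(t))·(1 − p(t))·u_ℓ^L − c) dt + e^{−ρT}·P(T)·U(p(T)) ≤ max{U(p₀), U^FA(p₀)}. -/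
set_option linter.unusedVariables false

noncomputable section

def Ur (urR ulR urL ulL lam rho c p : ℝ) : ℝ := p * urR + (1 - p) * urL

def Ul (urR ulR urL ulL lam rho c p : ℝ) : ℝ := p * ulR + (1 - p) * ulL

def U (urR ulR urL ulL lam rho c p : ℝ) : ℝ :=
  max (Ur urR ulR urL ulL lam rho c p) (Ul urR ulR urL ulL lam rho c p)

/-- Full-attention value `U^FA(p)`. -/
def UFA (urR ulR urL ulL lam rho c p : ℝ) : ℝ :=
  (lam * (p * urR + (1 - p) * ulL) - c) / (rho + lam)

open MeasureTheory intervalIntegral Set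
set_option maxHeartbeats 1600000

/-- Interval integrability of a measurable function dominated by a continuous one. -/
lemma ii_of_le_cont {f g : ℝ → ℝ} (hm : Measurable f) (hg : Continuous g)
    (h : ∀ t, |f t| ≤ g t) (a b : ℝ) : IntervalIntegrable f volume a b := by
  apply IntervalIntegrable.mono_fun' (hg.intervalIntegrable a b)
    hm.aestronglyMeasurable
  filter_upwards with t using h t

lemma ii_mul_cont {u v : ℝ → ℝ} {C : ℝ} (hu : Measurable u) (hbd : ∀ t, |u t| ≤ C)
    (hv : Continuous v) (a b : ℝ) :
    IntervalIntegrable (fun t => u t * v t) volume a b := by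
  apply ii_of_le_cont (hu.mul hv.measurable) (continuous_const.mul hv.abs)
  intro t
  rw [Pi.mul_apply, Pi.mul_apply, abs_mul]
  have h0 : 0 ≤ C := le_trans (abs_nonneg _) (hbd t)
  exact mul_le_mul_of_nonneg_right (hbd t) (abs_nonneg _)

/-- exp is 1-Lipschitz on nonpositive reals. -/
lemma exp_lip {x y : ℝ} (hx : x ≤ 0) (hy : y ≤ 0) :
    |Real.exp x - Real.exp y| ≤ |x - y| := by
  wlog hxy : y ≤ x generalizing x y
  · rw [abs_sub_comm, abs_sub_comm x y]; exact this hy hx (le_of_not_ge hxy)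
  have h1 : Real.exp x ≤ 1 := Real.exp_le_one_iff.2 hx
  have h2 : Real.exp y ≤ Real.exp x := Real.exp_le_exp.2 hxy
  have h3 : Real.exp x - Real.exp y ≤ x - y := by
    have := Real.add_one_le_exp (y - x)
    have hex : Real.exp y = Real.exp x * Real.exp (y - x) := by
      rw [← Real.exp_add]; ring_nf
    nlinarith [Real.exp_pos x]
  rw [abs_of_nonneg (by linarith), abs_of_nonneg (by linarith)]
  exact h3

/-- Approximate a bounded measurable function in L¹ on `[0,b]` by a continuous
function with the same bounds. -/
lemma approx_cont {g : ℝ → ℝ} (hm : Measurable g) {K : ℝ} (hK : 0 ≤ K)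
    (hg : ∀ t, g t ∈ Set.Icc 0 K) {b : ℝ} (hb0 : 0 ≤ b) {ε : ℝ} (hε : 0 < ε) :
    ∃ β : ℝ → ℝ, Continuous β ∧ (∀ t, β t ∈ Set.Icc 0 K) ∧
      (∫ t in (0:ℝ)..b, |g t - β t|) ≤ ε := by
  rcases eq_or_lt_of_le hb0 with hb | hb
  · refine ⟨fun _ => 0, continuous_const, fun t => ⟨le_refl _, hK⟩, ?_⟩
    rw [← hb]
    simp [hε.le]
  · set μ := volume.restrict (Set.Ioc (0:ℝ) b) with hμ
    have hfin : IsFiniteMeasure μ := by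
      constructor; rw [hμ, Measure.restrict_apply MeasurableSet.univ, Set.univ_inter]
      exact measure_Ioc_lt_top
    have hint : Integrable g μ := by
      apply Integrable.mono' (integrable_const K)
      · exact hm.aestronglyMeasurable
      · filter_upwards with t
        rw [Real.norm_eq_abs, abs_of_nonneg (hg t).1]; exact (hg t).2
    obtain ⟨g0, -, hL1, hg0cont, -⟩ :=
      hint.exists_hasCompactSupport_integral_sub_le hε
    set β : ℝ → ℝ := fun t => max 0 (min K (g0 t)) with hβ
    have hβcont : Continuous β := continuous_const.max (continuous_const.min hg0cont)
    have hβmem : ∀ t, β t ∈ Set.Icc 0 K := fun t =>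
      ⟨le_max_left _ _, max_le hK (min_le_left _ _)⟩
    have hptwise : ∀ t, |g t - β t| ≤ |g t - g0 t| := by
      intro t
      have h1 := (hg t).1; have h2 := (hg t).2
      rw [hβ]; dsimp only
      rcases le_total (g0 t) 0 with h | h
      · rw [max_eq_left (by simpa using le_trans (min_le_right _ _) h)]
        rw [abs_of_nonneg (by linarith), abs_of_nonneg (by linarith)]
        linarith
      · rcases le_total K (g0 t) with h' | h'
        · rw [min_eq_left h', max_eq_right hK]
          rw [abs_of_nonpos (by linarith), abs_of_nonpos (by linarith)]
          linarith
        · rw [min_eq_right h', max_eq_right h]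
    have hcontbd : Continuous (fun t => K + |g0 t|) := continuous_const.add hg0cont.abs
    have hbd2 : ∀ t, |g t - g0 t| ≤ K + |g0 t| := by
      intro t
      calc |g t - g0 t| ≤ |g t| + |g0 t| := abs_sub _ _
        _ ≤ K + |g0 t| := by
            have := (hg t).1; have := (hg t).2
            have : |g t| ≤ K := by rw [abs_of_nonneg (hg t).1]; exact (hg t).2
            linarith
    refine ⟨β, hβcont, hβmem, ?_⟩
    calc (∫ t in (0:ℝ)..b, |g t - β t|)
        ≤ ∫ t in (0:ℝ)..b, |g t - g0 t| := by
          apply intervalIntegral.integral_mono_on hb0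
          · apply ii_of_le_cont (by fun_prop) hcontbd
            intro t; rw [abs_abs]
            exact le_trans (hptwise t) (hbd2 t)
          · apply ii_of_le_cont (by fun_prop) hcontbd
            intro t; rw [abs_abs]; exact hbd2 t
          · intro t _; exact hptwise t
      _ = ∫ t, ‖g t - g0 t‖ ∂μ := by
          rw [hμ, intervalIntegral.integral_of_le hb0]
          rfl
      _ ≤ ε := hL1

lemma primitive_le {f : ℝ → ℝ} (hii : ∀ u v, IntervalIntegrable f volume u v)
    (hf : ∀ t, 0 ≤ f t) {t b : ℝ} (h : t ≤ b) :
    ∫ s in (0:ℝ)..t, f s ≤ ∫ s in (0:ℝ)..b, f s := by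
  rw [← intervalIntegral.integral_add_adjacent_intervals (hii 0 t) (hii t b)]
  have : 0 ≤ ∫ s in t..b, f s :=
    intervalIntegral.integral_nonneg h (fun u _ => hf u)
  linarith

-- continuous case of FTC identity
lemma ftc_exp_cont {β : ℝ → ℝ} (hc : Continuous β) (a b : ℝ) :
    ∫ t in a..b, β t * Real.exp (-∫ s in (0:ℝ)..t, β s)
      = Real.exp (-∫ s in (0:ℝ)..a, β s) - Real.exp (-∫ s in (0:ℝ)..b, β s) := by
  set G : ℝ → ℝ := fun t => ∫ s in (0:ℝ)..t, β s with hG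
  have hGd : ∀ t : ℝ, HasDerivAt G (β t) t := fun t =>
    intervalIntegral.integral_hasDerivAt_right (hc.intervalIntegrable _ _)
      hc.aestronglyMeasurable.stronglyMeasurableAtFilter hc.continuousAt
  have hΦ : ∀ t : ℝ, HasDerivAt (fun u => -Real.exp (-G u)) (β t * Real.exp (-G t)) t := by
    intro t
    have h1 : HasDerivAt (fun u => -G u) (-β t) t := (hGd t).neg
    have h2 : HasDerivAt (fun u => Real.exp (-G u)) (Real.exp (-G t) * (-β t)) t :=
      h1.exp
    have : HasDerivAt (fun u => -Real.exp (-G u)) (-(Real.exp (-G t) * -β t)) t := h2.neg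
    convert this using 1
    ring
  have hGc : Continuous G := intervalIntegral.continuous_primitive (fun a b => hc.intervalIntegrable a b) 0
  have hic : Continuous fun t => β t * Real.exp (-G t) := hc.mul (hGc.neg.rexp)
  have := intervalIntegral.integral_eq_sub_of_hasDerivAt
    (f := fun u => -Real.exp (-G u)) (f' := fun t => β t * Real.exp (-G t))
    (fun t _ => hΦ t) (hic.intervalIntegrable a b)
  rw [hG] at this
  rw [this]
  ring

/-- FTC identity for the exponential of a primitive of a bounded measurable function. -/
lemma ftc_exp {g : ℝ → ℝ} (hm : Measurable g) {K : ℝ}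
    (hg : ∀ t, g t ∈ Set.Icc 0 K) {a b : ℝ} (h0a : 0 ≤ a) (hab : a ≤ b) :
    ∫ t in a..b, g t * Real.exp (-∫ s in (0:ℝ)..t, g s)
      = Real.exp (-∫ s in (0:ℝ)..a, g s) - Real.exp (-∫ s in (0:ℝ)..b, g s) := by
  have hK : 0 ≤ K := le_trans (hg 0).1 (hg 0).2
  have hgabs : ∀ t, |g t| ≤ K := fun t => by
    rw [abs_of_nonneg (hg t).1]; exact (hg t).2
  have gii : ∀ u v, IntervalIntegrable g volume u v := fun u v =>
    ii_of_le_cont hm continuous_const hgabs u v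
  set Gg : ℝ → ℝ := fun t => ∫ s in (0:ℝ)..t, g s with hGg
  have hGgc : Continuous Gg := intervalIntegral.continuous_primitive gii 0
  have hGgnn : ∀ t, 0 ≤ t → 0 ≤ Gg t := fun t ht =>
    intervalIntegral.integral_nonneg ht (fun u _ => (hg u).1)
  set L := ∫ t in a..b, g t * Real.exp (-Gg t) with hL
  set R := Real.exp (-Gg a) - Real.exp (-Gg b) with hR
  have key : ∀ ε : ℝ, 0 < ε → |L - R| ≤ (3 + K * (b - a)) * ε := by
    intro ε hε
    obtain ⟨β, hβc, hβmem, hβL1⟩ := approx_cont hm hK hg (le_trans h0a hab) hε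
    set Gβ : ℝ → ℝ := fun t => ∫ s in (0:ℝ)..t, β s with hGβ
    have hGβc : Continuous Gβ :=
      intervalIntegral.continuous_primitive (fun u v => hβc.intervalIntegrable u v) 0
    have hGβnn : ∀ t, 0 ≤ t → 0 ≤ Gβ t := fun t ht =>
      intervalIntegral.integral_nonneg ht (fun u _ => (hβmem u).1)
    set η := ∫ t in (0:ℝ)..b, |g t - β t| with hη
    have hdiffii : ∀ u v, IntervalIntegrable (fun t => |g t - β t|) volume u v := by
      intro u v
      apply ii_of_le_cont (by fun_prop) (continuous_const.add hβc.abs)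
      intro t; rw [abs_abs]
      calc |g t - β t| ≤ |g t| + |β t| := abs_sub _ _
        _ ≤ K + |β t| := by have := hgabs t; linarith
    have hηnn : 0 ≤ η :=
      intervalIntegral.integral_nonneg (le_trans h0a hab) (fun u _ => abs_nonneg _)
    -- primitive comparison
    have hGdiff : ∀ t, 0 ≤ t → t ≤ b → |Gg t - Gβ t| ≤ η := by
      intro t ht htb
      have h1 : Gg t - Gβ t = ∫ s in (0:ℝ)..t, (g s - β s) :=
        (intervalIntegral.integral_sub (gii 0 t) (hβc.intervalIntegrable 0 t)).symm
      rw [h1]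
      calc |∫ s in (0:ℝ)..t, (g s - β s)| ≤ ∫ s in (0:ℝ)..t, |g s - β s| :=
            intervalIntegral.abs_integral_le_integral_abs ht
        _ ≤ η := primitive_le hdiffii (fun s => abs_nonneg _) htb
    have hexp : ∀ t, 0 ≤ t → t ≤ b → |Real.exp (-Gg t) - Real.exp (-Gβ t)| ≤ η := by
      intro t ht htb
      calc |Real.exp (-Gg t) - Real.exp (-Gβ t)| ≤ |(-Gg t) - (-Gβ t)| :=
            exp_lip (neg_nonpos.2 (hGgnn t ht)) (neg_nonpos.2 (hGβnn t ht))
        _ = |Gg t - Gβ t| := by rw [← abs_neg]; ring_nf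
        _ ≤ η := hGdiff t ht htb
    -- the two integrals
    have hiig : IntervalIntegrable (fun t => g t * Real.exp (-Gg t)) volume a b :=
      ii_mul_cont hm hgabs (hGgc.neg.rexp) a b
    have hiiβ : IntervalIntegrable (fun t => β t * Real.exp (-Gβ t)) volume a b :=
      (hβc.mul (hGβc.neg.rexp)).intervalIntegrable a b
    have hptw : ∀ t, 0 ≤ t → t ≤ b →
        |g t * Real.exp (-Gg t) - β t * Real.exp (-Gβ t)| ≤ |g t - β t| + K * η := by
      intro t ht htb
      have e1 : Real.exp (-Gg t) ≤ 1 :=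
        Real.exp_le_one_iff.2 (neg_nonpos.2 (hGgnn t ht))
      have e1' : 0 < Real.exp (-Gg t) := Real.exp_pos _
      have h2 : |β t| ≤ K := by rw [abs_of_nonneg (hβmem t).1]; exact (hβmem t).2
      calc |g t * Real.exp (-Gg t) - β t * Real.exp (-Gβ t)|
          = |(g t - β t) * Real.exp (-Gg t)
              + β t * (Real.exp (-Gg t) - Real.exp (-Gβ t))| := by ring_nf
        _ ≤ |(g t - β t) * Real.exp (-Gg t)|
              + |β t * (Real.exp (-Gg t) - Real.exp (-Gβ t))| := abs_add_le _ _
        _ ≤ |g t - β t| + K * η := by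
            rw [abs_mul, abs_mul]
            have b1 : |g t - β t| * |Real.exp (-Gg t)| ≤ |g t - β t| * 1 := by
              apply mul_le_mul_of_nonneg_left _ (abs_nonneg _)
              rw [abs_of_pos e1']; exact e1
            have b2 : |β t| * |Real.exp (-Gg t) - Real.exp (-Gβ t)| ≤ K * η := by
              apply mul_le_mul h2 (hexp t ht htb) (abs_nonneg _) hK
            linarith
    have hint_diff : |L - ∫ t in a..b, β t * Real.exp (-Gβ t)| ≤ ε + K * η * (b - a) := by
      rw [hL, ← intervalIntegral.integral_sub hiig hiiβ]
      calc |∫ t in a..b, (g t * Real.exp (-Gg t) - β t * Real.exp (-Gβ t))|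
          ≤ ∫ t in a..b, |g t * Real.exp (-Gg t) - β t * Real.exp (-Gβ t)| :=
            intervalIntegral.abs_integral_le_integral_abs hab
        _ ≤ ∫ t in a..b, (|g t - β t| + K * η) := by
            apply intervalIntegral.integral_mono_on hab (hiig.sub hiiβ).abs
              ((hdiffii a b).add (intervalIntegrable_const))
            intro t htmem
            exact hptw t (le_trans h0a htmem.1) htmem.2
        _ = (∫ t in a..b, |g t - β t|) + K * η * (b - a) := by
            rw [intervalIntegral.integral_add (hdiffii a b) intervalIntegrable_const,
              intervalIntegral.integral_const]
            simp only [smul_eq_mul]; ring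
        _ ≤ η + K * η * (b - a) := by
            have : (∫ t in a..b, |g t - β t|) ≤ η := by
              rw [hη, ← intervalIntegral.integral_add_adjacent_intervals
                (hdiffii 0 a) (hdiffii a b)]
              have : 0 ≤ ∫ t in (0:ℝ)..a, |g t - β t| :=
                intervalIntegral.integral_nonneg h0a (fun u _ => abs_nonneg _)
              linarith
            linarith
        _ ≤ ε + K * η * (b - a) := by linarith
    have hβid := ftc_exp_cont hβc a b
    have hbound : |L - R| ≤ (ε + K * η * (b - a)) + (η + η) := by
      have h3 : |(Real.exp (-Gβ a) - Real.exp (-Gβ b)) - R| ≤ η + η := by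
        rw [hR]
        calc |(Real.exp (-Gβ a) - Real.exp (-Gβ b))
              - (Real.exp (-Gg a) - Real.exp (-Gg b))|
            ≤ |Real.exp (-Gβ a) - Real.exp (-Gg a)|
              + |Real.exp (-Gg b) - Real.exp (-Gβ b)| := by
              have := abs_add_le (Real.exp (-Gβ a) - Real.exp (-Gg a))
                (Real.exp (-Gg b) - Real.exp (-Gβ b))
              calc _ = |(Real.exp (-Gβ a) - Real.exp (-Gg a))
                  + (Real.exp (-Gg b) - Real.exp (-Gβ b))| := by ring_nf
                _ ≤ _ := this
          _ ≤ η + η := by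
              have ha' := hexp a h0a hab
              have hb' := hexp b (le_trans h0a hab) le_rfl
              rw [abs_sub_comm] at ha'
              gcongr
        done
      have h4 : |L - (Real.exp (-Gβ a) - Real.exp (-Gβ b))| ≤ ε + K * η * (b - a) := by
        rw [← hβid]
        exact hint_diff
      calc |L - R| = |(L - (Real.exp (-Gβ a) - Real.exp (-Gβ b)))
          + ((Real.exp (-Gβ a) - Real.exp (-Gβ b)) - R)| := by ring_nf
        _ ≤ _ := abs_add_le _ _
        _ ≤ _ := by gcongr
    have hKb : K * η * (b - a) ≤ K * (b - a) * ε := by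
      have hba : 0 ≤ b - a := by linarith
      calc K * η * (b - a) ≤ K * ε * (b - a) := by
            apply mul_le_mul_of_nonneg_right _ hba
            exact mul_le_mul_of_nonneg_left hβL1 hK
        _ = K * (b - a) * ε := by ring
    calc |L - R| ≤ (ε + K * η * (b - a)) + (η + η) := hbound
      _ ≤ (ε + K * (b - a) * ε) + (ε + ε) := by
          have := hβL1; gcongr <;> linarith
      _ = (3 + K * (b - a)) * ε := by ring
  -- conclude equality
  have hC : 0 < 3 + K * (b - a) := by nlinarith [hK, sub_nonneg.2 hab]
  have : |L - R| ≤ 0 := by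
    by_contra h
    push_neg at h
    have h2 := key (|L - R| / (2 * (3 + K * (b - a))))
      (by positivity)
    rw [div_eq_mul_inv] at h2
    have : (3 + K * (b - a)) * (|L - R| * (2 * (3 + K * (b - a)))⁻¹) = |L - R| / 2 := by
      field_simp
    rw [this] at h2
    linarith
  have := abs_nonneg (L - R)
  have : L = R := by
    have : |L - R| = 0 := le_antisymm ‹|L - R| ≤ 0› (abs_nonneg _)
    have := abs_eq_zero.1 this
    linarith
  exact this

set_option maxHeartbeats 1600000

/-- Derivative of a scaled exponential of a primitive of a continuous function. -/
lemma hasDerivAt_exp_primitive {β : ℝ → ℝ} (hc : Continuous β) (γ lam : ℝ) (t : ℝ) :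
    HasDerivAt (fun u => γ * Real.exp (-lam * ∫ s in (0:ℝ)..u, β s))
      (-lam * β t * (γ * Real.exp (-lam * ∫ s in (0:ℝ)..t, β s))) t := by
  have hB : HasDerivAt (fun u => ∫ s in (0:ℝ)..u, β s) (β t) t :=
    intervalIntegral.integral_hasDerivAt_right (hc.intervalIntegrable _ _)
      hc.aestronglyMeasurable.stronglyMeasurableAtFilter hc.continuousAt
  have h1 : HasDerivAt (fun u => -lam * ∫ s in (0:ℝ)..u, β s) (-lam * β t) t :=
    hB.const_mul (-lam)
  have h2 := h1.exp
  have h3 : HasDerivAt (fun y => γ * Real.exp (-lam * ∫ s in (0:ℝ)..y, β s)) (γ * (Real.exp (-lam * ∫ s in (0:ℝ)..t, β s) * (-lam * β t))) t := h2.const_mul γ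
  convert h3 using 1
  ring

theorem key_identity (lam T : ℝ) (h_lam : 0 < lam) (hT : 0 ≤ T)
    (p0 : ℝ) (hp0 : p0 ∈ Set.Icc (0:ℝ) 1)
    (α : ℝ → ℝ) (hα_meas : Measurable α) (hα : ∀ t, α t ∈ Set.Icc (0:ℝ) 1)
    (p : ℝ → ℝ) (hp_diff : Differentiable ℝ p) (hp_init : p 0 = p0)
    (hp_ode : ∀ t ∈ Set.Icc (0:ℝ) T,
      deriv p t = -lam * (2 * α t - 1) * p t * (1 - p t)) :
    ∀ t ∈ Set.Icc (0:ℝ) T,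
      p t * (p0 * Real.exp (-lam * ∫ s in (0:ℝ)..t, α s)
          + (1 - p0) * Real.exp (-lam * ∫ s in (0:ℝ)..t, (1 - α s)))
        = p0 * Real.exp (-lam * ∫ s in (0:ℝ)..t, α s) := by
  intro t₀ ht₀
  obtain ⟨ht₀0, ht₀T⟩ := ht₀
  have hpc : Continuous p := hp_diff.continuous
  -- bound for p on [0,T]
  obtain ⟨Mp0, hMp0⟩ := (isCompact_Icc (a := (0:ℝ)) (b := T)).exists_bound_of_continuousOn
    hpc.continuousOn
  set Mp : ℝ := max Mp0 1 with hMp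
  have hMp1 : (1:ℝ) ≤ Mp := le_max_right _ _
  have hMpb : ∀ t ∈ Set.Icc (0:ℝ) T, |p t| ≤ Mp := fun t ht =>
    le_trans (hMp0 t ht) (le_max_left _ _)
  set KB := lam * (Mp + 1) * T with hKB
  have hKBnn : 0 ≤ KB := by positivity
  set CC := 8 * lam * Mp * Mp * Real.exp KB with hCC
  set CF := CC * Real.exp KB + (2 * Mp + 1) * lam with hCF
  -- the final quantities
  set wα := p0 * Real.exp (-lam * ∫ s in (0:ℝ)..t₀, α s) with hwα
  set vα := (1 - p0) * Real.exp (-lam * ∫ s in (0:ℝ)..t₀, (1 - α s)) with hvα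
  have main : ∀ ε : ℝ, 0 < ε → |p t₀ * (wα + vα) - wα| ≤ CF * ε := by
    intro ε hε
    obtain ⟨β, hβc, hβm, hβL1⟩ := approx_cont hα_meas (zero_le_one) hα hT hε
    set wβ : ℝ → ℝ := fun u => p0 * Real.exp (-lam * ∫ s in (0:ℝ)..u, β s) with hwβ
    set vβ : ℝ → ℝ := fun u => (1 - p0) * Real.exp (-lam * ∫ s in (0:ℝ)..u, (1 - β s))
      with hvβ
    have hwβd : ∀ u, HasDerivAt wβ (-lam * β u * wβ u) u := fun u =>
      hasDerivAt_exp_primitive hβc p0 lam u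
    have hvβd : ∀ u, HasDerivAt vβ (-lam * (1 - β u) * vβ u) u := fun u =>
      hasDerivAt_exp_primitive (continuous_const.sub hβc) (1 - p0) lam u
    have hwβc : Continuous wβ := by
      apply continuous_const.mul
      apply Real.continuous_exp.comp
      exact continuous_const.mul (intervalIntegral.continuous_primitive
        (fun a b => hβc.intervalIntegrable a b) 0)
    have hvβc : Continuous vβ := by
      apply continuous_const.mul
      apply Real.continuous_exp.comp
      exact continuous_const.mul (intervalIntegral.continuous_primitive
        (fun a b => (continuous_const.sub hβc).intervalIntegrable a b) 0)
    -- bounds for wβ, vβ on [0, ∞)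
    have hwβb : ∀ u, 0 ≤ u → 0 ≤ wβ u ∧ wβ u ≤ 1 := by
      intro u hu
      have h1 : 0 ≤ ∫ s in (0:ℝ)..u, β s :=
        intervalIntegral.integral_nonneg hu (fun s _ => (hβm s).1)
      refine ⟨mul_nonneg hp0.1 (Real.exp_pos _).le, ?_⟩
      have h2 : Real.exp (-lam * ∫ s in (0:ℝ)..u, β s) ≤ 1 := by
        apply Real.exp_le_one_iff.2
        nlinarith
      have h3 := (Real.exp_pos (-lam * ∫ s in (0:ℝ)..u, β s)).le
      exact le_trans (mul_le_mul hp0.2 h2 h3 zero_le_one) (by norm_num)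
    have hvβb : ∀ u, 0 ≤ u → 0 ≤ vβ u ∧ vβ u ≤ 1 := by
      intro u hu
      have h1 : 0 ≤ ∫ s in (0:ℝ)..u, (1 - β s) :=
        intervalIntegral.integral_nonneg hu (fun s _ => by have := (hβm s).2; linarith)
      refine ⟨mul_nonneg (by have := hp0.2; linarith) (Real.exp_pos _).le, ?_⟩
      have h2 : Real.exp (-lam * ∫ s in (0:ℝ)..u, (1 - β s)) ≤ 1 := by
        apply Real.exp_le_one_iff.2
        nlinarith
      have h3 := (Real.exp_pos (-lam * ∫ s in (0:ℝ)..u, (1 - β s))).le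
      exact le_trans (mul_le_mul (by have := hp0.1; linarith) h2 h3 zero_le_one) (by norm_num)
    set δ : ℝ → ℝ := fun u => p u * (wβ u + vβ u) - wβ u with hδ
    set k : ℝ → ℝ := fun u => lam * (p u * (2 * β u - 1) - β u) with hk
    have hkc : Continuous k := by
      apply continuous_const.mul
      exact (hpc.mul ((continuous_const.mul hβc).sub continuous_const)).sub hβc
    set Kk : ℝ → ℝ := fun u => ∫ s in (0:ℝ)..u, k s with hKk
    have hKkd : ∀ u, HasDerivAt Kk (k u) u := fun u =>
      intervalIntegral.integral_hasDerivAt_right (hkc.intervalIntegrable _ _)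
        hkc.aestronglyMeasurable.stronglyMeasurableAtFilter hkc.continuousAt
    have hKkc : Continuous Kk :=
      intervalIntegral.continuous_primitive (fun a b => hkc.intervalIntegrable a b) 0
    set E : ℝ → ℝ := fun u => δ u * Real.exp (-Kk u) with hE
    set e : ℝ → ℝ := fun u =>
      (α u - β u) * (-2 * lam * (p u * (1 - p u) * (wβ u + vβ u) * Real.exp (-Kk u)))
      with he
    -- E has derivative e on [0,T]
    have hEd : ∀ u ∈ Set.Icc (0:ℝ) T, HasDerivAt E (e u) u := by
      intro u hu
      have hpd : HasDerivAt p (deriv p u) u := (hp_diff u).hasDerivAt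
      have hδd : HasDerivAt δ
          (deriv p u * (wβ u + vβ u)
            + p u * (-lam * β u * wβ u + -lam * (1 - β u) * vβ u)
            - -lam * β u * wβ u) u := by
        exact ((hpd.mul ((hwβd u).add (hvβd u))).sub (hwβd u))
      have hexpd : HasDerivAt (fun z => Real.exp (-Kk z)) (Real.exp (-Kk u) * (-k u)) u :=
        (hKkd u).neg.exp
      have : HasDerivAt (fun y => δ y * Real.exp (-Kk y)) _ u := hδd.mul hexpd
      convert this using 1
      rw [hp_ode u hu]
      rw [hδ, hwβ, hvβ, he, hk]
      dsimp only
      ring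
    -- FTC for E
    have heii : IntervalIntegrable e volume 0 t₀ := by
      have := ii_mul_cont (C := 1) (hα_meas.sub hβc.measurable)
        (fun t => by
          have h1 := (hα t).1; have h2 := (hα t).2
          have h3 := (hβm t).1; have h4 := (hβm t).2
          simp only [Pi.sub_apply]; rw [abs_le]; constructor <;> linarith)
        (by fun_prop : Continuous fun u =>
          -2 * lam * (p u * (1 - p u) * (wβ u + vβ u) * Real.exp (-Kk u))) 0 t₀
      exact this
    have hE0 : E 0 = 0 := by
      rw [hE, hδ, hKk, hwβ, hvβ]
      dsimp only
      rw [intervalIntegral.integral_same, intervalIntegral.integral_same,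
        intervalIntegral.integral_same, hp_init]
      simp
    have hftc : E t₀ - E 0 = ∫ u in (0:ℝ)..t₀, e u := by
      have := intervalIntegral.integral_eq_sub_of_hasDerivAt (f := E) (f' := e)
        (fun u hu => hEd u (by
          rw [Set.uIcc_of_le ht₀0] at hu
          exact ⟨hu.1, le_trans hu.2 ht₀T⟩)) heii
      rw [this]
    -- bounds
    have hKkb : ∀ u ∈ Set.Icc (0:ℝ) T, |Kk u| ≤ KB := by
      intro u hu
      have h1 : |Kk u| ≤ ∫ s in (0:ℝ)..u, |k s| := by
        rw [hKk]
        exact intervalIntegral.abs_integral_le_integral_abs hu.1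
      have h2 : (∫ s in (0:ℝ)..u, |k s|) ≤ ∫ s in (0:ℝ)..u, lam * (Mp + 1) := by
        apply intervalIntegral.integral_mono_on hu.1 (hkc.abs.intervalIntegrable 0 u)
          intervalIntegrable_const
        intro s hs
        rw [hk]; dsimp only
        rw [abs_mul, abs_of_pos h_lam]
        apply mul_le_mul_of_nonneg_left _ h_lam.le
        have h3 := hMpb s ⟨hs.1, le_trans hs.2 hu.2⟩
        have h4 := (hβm s).1; have h5 := (hβm s).2
        have h6 : |p s * (2 * β s - 1) - β s| ≤ |p s| * |2 * β s - 1| + |β s| := by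
          calc |p s * (2 * β s - 1) - β s| ≤ |p s * (2 * β s - 1)| + |β s| := abs_sub _ _
            _ = |p s| * |2 * β s - 1| + |β s| := by rw [abs_mul]
        have h7 : |2 * β s - 1| ≤ 1 := by rw [abs_le]; constructor <;> linarith
        have h8 : |β s| ≤ 1 := by rw [abs_le]; constructor <;> linarith
        calc |p s * (2 * β s - 1) - β s| ≤ |p s| * 1 + 1 := by
              apply le_trans h6
              have := mul_le_mul_of_nonneg_left h7 (abs_nonneg (p s))
              linarith
          _ ≤ Mp + 1 := by linarith
      have h3 : (∫ s in (0:ℝ)..u, lam * (Mp + 1)) = lam * (Mp + 1) * u := by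
        rw [intervalIntegral.integral_const]; simp [smul_eq_mul]; ring
      rw [h3] at h2
      have : lam * (Mp + 1) * u ≤ KB := by
        rw [hKB]
        apply mul_le_mul_of_nonneg_left hu.2 (by positivity)
      linarith
    have heb : ∀ u ∈ Set.Icc (0:ℝ) T, |e u| ≤ |α u - β u| * CC := by
      intro u hu
      rw [he]; dsimp only
      rw [abs_mul]
      apply mul_le_mul_of_nonneg_left _ (abs_nonneg _)
      have h1 := hMpb u hu
      have h2 := hwβb u hu.1
      have h3 := hvβb u hu.1
      have h4 : Real.exp (-Kk u) ≤ Real.exp KB := by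
        apply Real.exp_le_exp.2
        have := hKkb u hu
        rw [abs_le] at this
        linarith [this.1]
      have h5 : |p u * (1 - p u)| ≤ Mp * (Mp + 1) := by
        rw [abs_mul]
        apply mul_le_mul h1 _ (abs_nonneg _) (by positivity)
        calc |1 - p u| ≤ |(1:ℝ)| + |p u| := abs_sub _ _
          _ ≤ Mp + 1 := by rw [abs_one]; linarith
      have h6 : wβ u + vβ u ≤ 2 := by
        have := (hwβb u hu.1).2; have := (hvβb u hu.1).2; linarith
      have h6' : 0 ≤ wβ u + vβ u := by
        have := (hwβb u hu.1).1; have := (hvβb u hu.1).1; linarith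
      have e0 : |(-2 * lam) * (p u * (1 - p u) * (wβ u + vβ u) * Real.exp (-Kk u))|
          = (2 * lam) * |p u * (1 - p u) * (wβ u + vβ u) * Real.exp (-Kk u)| := by
        rw [abs_mul]
        congr 1
        rw [abs_of_neg (by linarith : -2 * lam < 0)]
        ring
      rw [e0]
      have e2 : |wβ u + vβ u| = wβ u + vβ u := abs_of_nonneg h6'
      have e3 : |Real.exp (-Kk u)| = Real.exp (-Kk u) := abs_of_pos (Real.exp_pos _)
      have hY : |p u * (1 - p u) * (wβ u + vβ u) * Real.exp (-Kk u)|
          ≤ Mp * (Mp + 1) * (2 * Real.exp KB) := by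
        rw [abs_mul, abs_mul, e2, e3]
        have m1 : |p u * (1 - p u)| * (wβ u + vβ u) ≤ (Mp * (Mp + 1)) * 2 :=
          mul_le_mul h5 h6 h6' (by positivity)
        calc |p u * (1 - p u)| * (wβ u + vβ u) * Real.exp (-Kk u)
            ≤ (Mp * (Mp + 1)) * 2 * Real.exp KB :=
              mul_le_mul m1 h4 (Real.exp_pos _).le (by positivity)
          _ = Mp * (Mp + 1) * (2 * Real.exp KB) := by ring
      rw [hCC]
      have hep := Real.exp_pos KB
      have s1 : 2 * lam * |p u * (1 - p u) * (wβ u + vβ u) * Real.exp (-Kk u)|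
          ≤ 2 * lam * (Mp * (Mp + 1) * (2 * Real.exp KB)) :=
        mul_le_mul_of_nonneg_left hY (by linarith)
      have s2 : 0 ≤ 4 * lam * Real.exp KB * Mp * (Mp - 1) := by
        apply mul_nonneg _ (by linarith : (0:ℝ) ≤ Mp - 1)
        apply mul_nonneg _ (by linarith : (0:ℝ) ≤ Mp)
        apply mul_nonneg (by linarith : (0:ℝ) ≤ 4 * lam) hep.le
      nlinarith [s1, s2]
    -- conclude: |E t₀| ≤ CC * ε
    have hMppos : (0:ℝ) < Mp := lt_of_lt_of_le one_pos hMp1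
    have hCCpos : 0 < CC := by
      rw [hCC]
      have hep := Real.exp_pos KB
      exact mul_pos (mul_pos (mul_pos (by linarith : (0:ℝ) < 8 * lam) hMppos) hMppos) hep
    have hABii : ∀ u v : ℝ, IntervalIntegrable (fun t => |α t - β t|) volume u v := by
      intro u v
      apply ii_of_le_cont ((hα_meas.sub hβc.measurable).abs) (continuous_const : Continuous fun _ => (1:ℝ))
      intro t
      rw [abs_abs, abs_le]
      have := (hα t).1; have := (hα t).2; have := (hβm t).1; have := (hβm t).2
      simp only [Pi.sub_apply]; constructor <;> linarith
    have hEt0 : |E t₀| ≤ CC * ε := by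
      have hEeq : E t₀ = ∫ u in (0:ℝ)..t₀, e u := by
        have h := hftc; rw [hE0] at h; linarith
      rw [hEeq]
      calc |∫ u in (0:ℝ)..t₀, e u| ≤ ∫ u in (0:ℝ)..t₀, |e u| :=
            intervalIntegral.abs_integral_le_integral_abs ht₀0
        _ ≤ ∫ u in (0:ℝ)..t₀, (|α u - β u| * CC) := by
            apply intervalIntegral.integral_mono_on ht₀0 heii.abs
              ((hABii 0 t₀).mul_const CC)
            intro u hu
            exact heb u ⟨hu.1, le_trans hu.2 ht₀T⟩
        _ = (∫ u in (0:ℝ)..t₀, |α u - β u|) * CC := intervalIntegral.integral_mul_const _ _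
        _ ≤ ε * CC := by
            apply mul_le_mul_of_nonneg_right _ hCCpos.le
            exact le_trans (primitive_le hABii (fun t => abs_nonneg _) ht₀T) hβL1
        _ = CC * ε := by ring
    have hδt0 : |δ t₀| ≤ CC * Real.exp KB * ε := by
      have hδeq : δ t₀ = E t₀ * Real.exp (Kk t₀) := by
        rw [hE]; dsimp only
        rw [mul_assoc, ← Real.exp_add]
        simp
      rw [hδeq, abs_mul]
      have hx : |Real.exp (Kk t₀)| ≤ Real.exp KB := by
        rw [abs_of_pos (Real.exp_pos _)]
        apply Real.exp_le_exp.2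
        have h := hKkb t₀ ⟨ht₀0, ht₀T⟩
        rw [abs_le] at h
        exact h.2
      calc |E t₀| * |Real.exp (Kk t₀)| ≤ (CC * ε) * Real.exp KB :=
            mul_le_mul hEt0 hx (abs_nonneg _) (by positivity)
        _ = CC * Real.exp KB * ε := by ring
    -- transfer from β to α
    have hαii : ∀ u v : ℝ, IntervalIntegrable α volume u v := fun u v =>
      ii_of_le_cont hα_meas (continuous_const : Continuous fun _ => (1:ℝ))
        (fun t => by
          have := (hα t).1; have := (hα t).2
          rw [abs_le]; constructor <;> linarith) u v
    have hIdiff : ∀ fα fβ : ℝ → ℝ, (∀ u v, IntervalIntegrable fα volume u v) →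
        (∀ u v, IntervalIntegrable fβ volume u v) →
        (∀ t, |fα t - fβ t| ≤ |α t - β t|) →
        |(∫ s in (0:ℝ)..t₀, fα s) - ∫ s in (0:ℝ)..t₀, fβ s| ≤ ε := by
      intro fα fβ h1 h2 h3
      rw [← intervalIntegral.integral_sub (h1 0 t₀) (h2 0 t₀)]
      calc |∫ s in (0:ℝ)..t₀, (fα s - fβ s)| ≤ ∫ s in (0:ℝ)..t₀, |fα s - fβ s| :=
            intervalIntegral.abs_integral_le_integral_abs ht₀0
        _ ≤ ∫ s in (0:ℝ)..t₀, |α s - β s| := by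
            apply intervalIntegral.integral_mono_on ht₀0 ((h1 0 t₀).sub (h2 0 t₀)).abs
              (hABii 0 t₀)
            intro s _
            exact h3 s
        _ ≤ ε := le_trans (primitive_le hABii (fun t => abs_nonneg _) ht₀T) hβL1
    have hd1 : |wα - wβ t₀| ≤ lam * ε := by
      rw [hwα, hwβ]; dsimp only
      rw [← mul_sub, abs_mul, abs_of_nonneg hp0.1]
      have hint1 : 0 ≤ ∫ s in (0:ℝ)..t₀, α s :=
        intervalIntegral.integral_nonneg ht₀0 (fun s _ => (hα s).1)
      have hint2 : 0 ≤ ∫ s in (0:ℝ)..t₀, β s :=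
        intervalIntegral.integral_nonneg ht₀0 (fun s _ => (hβm s).1)
      have hl := exp_lip (x := -lam * ∫ s in (0:ℝ)..t₀, α s)
        (y := -lam * ∫ s in (0:ℝ)..t₀, β s) (by nlinarith) (by nlinarith)
      have heq : |(-lam * ∫ s in (0:ℝ)..t₀, α s) - (-lam * ∫ s in (0:ℝ)..t₀, β s)|
          = lam * |(∫ s in (0:ℝ)..t₀, α s) - ∫ s in (0:ℝ)..t₀, β s| := by
        rw [show (-lam * ∫ s in (0:ℝ)..t₀, α s) - (-lam * ∫ s in (0:ℝ)..t₀, β s)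
          = -lam * ((∫ s in (0:ℝ)..t₀, α s) - ∫ s in (0:ℝ)..t₀, β s) by ring]
        rw [abs_mul, abs_neg, abs_of_pos h_lam]
      have hII := hIdiff α β hαii (fun u v => hβc.intervalIntegrable u v)
        (fun t => le_refl _)
      have hfin : |Real.exp (-lam * ∫ s in (0:ℝ)..t₀, α s)
          - Real.exp (-lam * ∫ s in (0:ℝ)..t₀, β s)| ≤ lam * ε := by
        apply le_trans hl
        rw [heq]
        exact mul_le_mul_of_nonneg_left hII h_lam.le
      calc p0 * |Real.exp (-lam * ∫ s in (0:ℝ)..t₀, α s)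
            - Real.exp (-lam * ∫ s in (0:ℝ)..t₀, β s)| ≤ 1 * (lam * ε) :=
            mul_le_mul hp0.2 hfin (abs_nonneg _) zero_le_one
        _ = lam * ε := one_mul _
    have h1mαii : ∀ u v : ℝ, IntervalIntegrable (fun t => 1 - α t) volume u v := fun u v =>
      ii_of_le_cont (measurable_const.sub hα_meas) (continuous_const : Continuous fun _ => (1:ℝ))
        (fun t => by
          have := (hα t).1; have := (hα t).2
          simp only [Pi.sub_apply]; rw [abs_le]; constructor <;> linarith) u v
    have hd2 : |vα - vβ t₀| ≤ lam * ε := by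
      rw [hvα, hvβ]; dsimp only
      rw [← mul_sub, abs_mul, abs_of_nonneg (by have := hp0.2; linarith : (0:ℝ) ≤ 1 - p0)]
      have hint1 : 0 ≤ ∫ s in (0:ℝ)..t₀, (1 - α s) :=
        intervalIntegral.integral_nonneg ht₀0 (fun s _ => by have := (hα s).2; linarith)
      have hint2 : 0 ≤ ∫ s in (0:ℝ)..t₀, (1 - β s) :=
        intervalIntegral.integral_nonneg ht₀0 (fun s _ => by have := (hβm s).2; linarith)
      have hl := exp_lip (x := -lam * ∫ s in (0:ℝ)..t₀, (1 - α s))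
        (y := -lam * ∫ s in (0:ℝ)..t₀, (1 - β s)) (by nlinarith) (by nlinarith)
      have heq : |(-lam * ∫ s in (0:ℝ)..t₀, (1 - α s))
            - (-lam * ∫ s in (0:ℝ)..t₀, (1 - β s))|
          = lam * |(∫ s in (0:ℝ)..t₀, (1 - α s)) - ∫ s in (0:ℝ)..t₀, (1 - β s)| := by
        rw [show (-lam * ∫ s in (0:ℝ)..t₀, (1 - α s))
            - (-lam * ∫ s in (0:ℝ)..t₀, (1 - β s))
          = -lam * ((∫ s in (0:ℝ)..t₀, (1 - α s)) - ∫ s in (0:ℝ)..t₀, (1 - β s)) by ring]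
        rw [abs_mul, abs_neg, abs_of_pos h_lam]
      have hII := hIdiff (fun t => 1 - α t) (fun t => 1 - β t) h1mαii
        (fun u v => (continuous_const.sub hβc).intervalIntegrable u v)
        (fun t => by
          rw [show (1 - α t) - (1 - β t) = -(α t - β t) by ring, abs_neg])
      have hfin : |Real.exp (-lam * ∫ s in (0:ℝ)..t₀, (1 - α s))
          - Real.exp (-lam * ∫ s in (0:ℝ)..t₀, (1 - β s))| ≤ lam * ε := by
        apply le_trans hl
        rw [heq]
        exact mul_le_mul_of_nonneg_left hII h_lam.le
      calc (1 - p0) * |Real.exp (-lam * ∫ s in (0:ℝ)..t₀, (1 - α s))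
            - Real.exp (-lam * ∫ s in (0:ℝ)..t₀, (1 - β s))| ≤ 1 * (lam * ε) :=
            mul_le_mul (by have := hp0.1; linarith) hfin (abs_nonneg _)
              zero_le_one
        _ = lam * ε := one_mul _
    -- assemble
    have hsplit : p t₀ * (wα + vα) - wα
        = δ t₀ + (p t₀ * ((wα - wβ t₀) + (vα - vβ t₀)) - (wα - wβ t₀)) := by
      rw [hδ]; ring
    rw [hsplit]
    have b0 : |p t₀| ≤ Mp := hMpb t₀ ⟨ht₀0, ht₀T⟩
    have b1 : |(wα - wβ t₀) + (vα - vβ t₀)| ≤ lam * ε + lam * ε :=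
      le_trans (abs_add_le _ _) (by linarith)
    have hR : |p t₀ * ((wα - wβ t₀) + (vα - vβ t₀)) - (wα - wβ t₀)|
        ≤ Mp * (lam * ε + lam * ε) + lam * ε := by
      calc |p t₀ * ((wα - wβ t₀) + (vα - vβ t₀)) - (wα - wβ t₀)|
          ≤ |p t₀ * ((wα - wβ t₀) + (vα - vβ t₀))| + |wα - wβ t₀| := abs_sub _ _
        _ = |p t₀| * |(wα - wβ t₀) + (vα - vβ t₀)| + |wα - wβ t₀| := by rw [abs_mul]
        _ ≤ Mp * (lam * ε + lam * ε) + lam * ε := by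
            have := mul_le_mul b0 b1 (abs_nonneg _) hMppos.le
            linarith
    calc |δ t₀ + (p t₀ * ((wα - wβ t₀) + (vα - vβ t₀)) - (wα - wβ t₀))|
        ≤ |δ t₀| + |p t₀ * ((wα - wβ t₀) + (vα - vβ t₀)) - (wα - wβ t₀)| := abs_add_le _ _
      _ ≤ CC * Real.exp KB * ε + (Mp * (lam * ε + lam * ε) + lam * ε) :=
          add_le_add hδt0 hR
      _ = CF * ε := by rw [hCF]; ring
  -- from the ε-bound conclude the identity
  have hCFpos : 0 < CF := by
    rw [hCF]
    have h1 : 0 < (2 * Mp + 1) * lam := by nlinarith [hMp1, h_lam]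
    have h2 : 0 ≤ CC * Real.exp KB := by
      rw [hCC]
      have := (Real.exp_pos KB).le
      have hMpnn : (0:ℝ) ≤ Mp := by linarith [hMp1]
      have : 0 ≤ 8 * lam * Mp * Mp :=
        mul_nonneg (mul_nonneg (by linarith [h_lam] : (0:ℝ) ≤ 8 * lam) hMpnn) hMpnn
      positivity
    linarith
  have hzero : p t₀ * (wα + vα) - wα = 0 := by
    by_contra h
    have habs : 0 < |p t₀ * (wα + vα) - wα| := abs_pos.2 h
    have := main (|p t₀ * (wα + vα) - wα| / (2 * CF)) (by positivity)
    have hcf : CF * (|p t₀ * (wα + vα) - wα| / (2 * CF)) = |p t₀ * (wα + vα) - wα| / 2 := by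
      field_simp
    rw [hcf] at this
    linarith
  linarith

/-- If `h3` is nonincreasing on `[0,T]` and `h1` is nonincreasing on any subinterval
where `h3 < h1` strictly beyond the left endpoint, then `h1 T ≤ max (h1 0) (h3 0)`. -/
lemma aux_max {h1 h3 : ℝ → ℝ} {T : ℝ} (hT : 0 ≤ T)
    (c1 : Continuous h1) (c3 : Continuous h3)
    (m3 : ∀ a b, 0 ≤ a → a ≤ b → b ≤ T → h3 b ≤ h3 a)
    (m1 : ∀ a b, 0 ≤ a → a ≤ b → b ≤ T → (∀ t, a < t → t ≤ b → h3 t < h1 t) →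
      h1 b ≤ h1 a) :
    h1 T ≤ max (h1 0) (h3 0) := by
  rcases le_or_gt (h1 T) (h3 T) with hc | hc
  · exact le_max_of_le_right (le_trans hc (m3 0 T le_rfl hT le_rfl))
  · set B : Set ℝ := Set.Icc 0 T ∩ {t | h1 t ≤ h3 t} with hB
    rcases eq_or_ne B ∅ with hBe | hBne
    · apply le_max_of_le_left
      apply m1 0 T le_rfl hT le_rfl
      intro t ht0 htT
      by_contra hcon
      push_neg at hcon
      have : t ∈ B := ⟨⟨ht0.le, htT⟩, hcon⟩
      rw [hBe] at this
      exact this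
    · have hBclosed : IsClosed B := by
        apply IsClosed.inter isClosed_Icc
        have : {t : ℝ | h1 t ≤ h3 t} = {t : ℝ | (h1 - h3) t ≤ 0} := by
          ext t; simp [sub_nonpos]
        rw [this]
        exact isClosed_le (c1.sub c3) continuous_const
      have hBnonempty : B.Nonempty := Set.nonempty_iff_ne_empty.2 hBne
      have hBbdd : BddAbove B := bddAbove_Icc.mono Set.inter_subset_left
      set s := sSup B with hs
      have hsB : s ∈ B := IsClosed.csSup_mem hBclosed hBnonempty hBbdd
      have hs0 : 0 ≤ s := hsB.1.1
      have hsT : s ≤ T := hsB.1.2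
      apply le_max_of_le_right
      have step1 : h1 T ≤ h1 s := by
        apply m1 s T hs0 hsT le_rfl
        intro t hst htT
        by_contra hcon
        push_neg at hcon
        have htB : t ∈ B := ⟨⟨le_trans hs0 hst.le, htT⟩, hcon⟩
        have : t ≤ s := le_csSup hBbdd htB
        linarith
      calc h1 T ≤ h1 s := step1
        _ ≤ h3 s := hsB.2
        _ ≤ h3 0 := m3 0 s le_rfl hs0 hsT

/-- Upper bound on the payoff of any attention strategy `(α, T)`:
the expected payoff is at most `max{U(p₀), U^FA(p₀)}`. -/
theorem payoff_upper_bound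
    (urR ulR urL ulL lam rho c : ℝ)
    (h_urR : urR > max 0 ulR) (h_ulL : ulL > max 0 urL)
    (h_lam : 0 < lam) (h_rho : 0 ≤ rho) (h_c : 0 ≤ c)
    (h_nz : rho ≠ 0 ∨ c ≠ 0)
    (p0 : ℝ) (hp0 : p0 ∈ Set.Icc (0 : ℝ) 1)
    (T : ℝ) (hT : 0 ≤ T)
    (α : ℝ → ℝ) (hα_meas : Measurable α) (hα : ∀ t, α t ∈ Set.Icc (0 : ℝ) 1)
    (p : ℝ → ℝ) (hp_diff : Differentiable ℝ p) (hp_init : p 0 = p0)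
    (hp_ode : ∀ t ∈ Set.Icc (0 : ℝ) T,
      deriv p t = -lam * (2 * α t - 1) * p t * (1 - p t))
    (P : ℝ → ℝ)
    (hP : ∀ t, P t = p0 * Real.exp (-lam * ∫ s in (0 : ℝ)..t, α s)
      + (1 - p0) * Real.exp (-lam * ∫ s in (0 : ℝ)..t, (1 - α s))) :
    (∫ t in (0 : ℝ)..T,
        Real.exp (-rho * t) * P t
          * (lam * α t * p t * urR + lam * (1 - α t) * (1 - p t) * ulL - c))
      + Real.exp (-rho * T) * P T * U urR ulR urL ulL lam rho c (p T)
    ≤ max (U urR ulR urL ulL lam rho c p0) (UFA urR ulR urL ulL lam rho c p0) := by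
  have hrl : 0 < rho + lam := by linarith
  have hurR0 : 0 < urR := lt_of_le_of_lt (le_max_left 0 ulR) h_urR
  have hulL0 : 0 < ulL := lt_of_le_of_lt (le_max_left 0 urL) h_ulL
  have hurRulR : ulR ≤ urR := le_of_lt (lt_of_le_of_lt (le_max_right 0 ulR) h_urR)
  have hulLurL : urL ≤ ulL := le_of_lt (lt_of_le_of_lt (le_max_right 0 urL) h_ulL)
  set a3 : ℝ := (lam * urR - c) / (rho + lam) with ha3def
  set b3 : ℝ := (lam * ulL - c) / (rho + lam) with hb3def
  have ha3 : a3 * (rho + lam) = lam * urR - c := div_mul_cancel₀ _ hrl.ne'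
  have hb3 : b3 * (rho + lam) = lam * ulL - c := div_mul_cancel₀ _ hrl.ne'
  -- the measurable drivers
  set g1 : ℝ → ℝ := fun t => rho + lam * α t with hg1
  set g2 : ℝ → ℝ := fun t => rho + lam * (1 - α t) with hg2
  have hg1m : Measurable g1 := measurable_const.add (hα_meas.const_mul lam)
  have hg2m : Measurable g2 :=
    measurable_const.add ((measurable_const.sub hα_meas).const_mul lam)
  have hg1mem : ∀ t, g1 t ∈ Set.Icc 0 (rho + lam) := by
    intro t
    have h1 := (hα t).1; have h2 := (hα t).2
    constructor
    · rw [hg1]; dsimp only; nlinarith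
    · rw [hg1]; dsimp only; nlinarith
  have hg2mem : ∀ t, g2 t ∈ Set.Icc 0 (rho + lam) := by
    intro t
    have h1 := (hα t).1; have h2 := (hα t).2
    constructor
    · rw [hg2]; dsimp only; nlinarith
    · rw [hg2]; dsimp only; nlinarith
  have hg1abs : ∀ t, |g1 t| ≤ rho + lam := fun t => by
    rw [abs_of_nonneg (hg1mem t).1]; exact (hg1mem t).2
  have hg2abs : ∀ t, |g2 t| ≤ rho + lam := fun t => by
    rw [abs_of_nonneg (hg2mem t).1]; exact (hg2mem t).2
  have hg1ii : ∀ a b : ℝ, IntervalIntegrable g1 volume a b := fun a b =>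
    ii_of_le_cont hg1m continuous_const hg1abs a b
  have hg2ii : ∀ a b : ℝ, IntervalIntegrable g2 volume a b := fun a b =>
    ii_of_le_cont hg2m continuous_const hg2abs a b
  have hαii : ∀ a b : ℝ, IntervalIntegrable α volume a b := fun a b =>
    ii_of_le_cont hα_meas (continuous_const : Continuous fun _ => (1:ℝ))
      (fun t => by
        have := (hα t).1; have := (hα t).2
        rw [abs_le]; constructor <;> linarith) a b
  have h1mαii : ∀ a b : ℝ, IntervalIntegrable (fun s => 1 - α s) volume a b := fun a b =>
    ii_of_le_cont (measurable_const.sub hα_meas)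
      (continuous_const : Continuous fun _ => (1:ℝ))
      (fun t => by
        have := (hα t).1; have := (hα t).2
        simp only [Pi.sub_apply]; rw [abs_le]; constructor <;> linarith) a b
  -- the x, y functions
  set x : ℝ → ℝ := fun t => p0 * Real.exp (-∫ s in (0:ℝ)..t, g1 s) with hx
  set y : ℝ → ℝ := fun t => (1 - p0) * Real.exp (-∫ s in (0:ℝ)..t, g2 s) with hy
  have hxc : Continuous x := continuous_const.mul (Real.continuous_exp.comp
    (intervalIntegral.continuous_primitive hg1ii 0).neg)
  have hyc : Continuous y := continuous_const.mul (Real.continuous_exp.comp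
    (intervalIntegral.continuous_primitive hg2ii 0).neg)
  have hxnn : ∀ t, 0 ≤ x t := fun t => mul_nonneg hp0.1 (Real.exp_pos _).le
  have hynn : ∀ t, 0 ≤ y t := fun t =>
    mul_nonneg (by have := hp0.2; linarith) (Real.exp_pos _).le
  -- FTC identities for x and y
  have hxftc : ∀ a b : ℝ, 0 ≤ a → a ≤ b →
      (∫ t in a..b, g1 t * x t) = x a - x b := by
    intro a b h0a hab
    have h := ftc_exp hg1m hg1mem h0a hab
    calc (∫ t in a..b, g1 t * x t)
        = ∫ t in a..b, p0 * (g1 t * Real.exp (-∫ s in (0:ℝ)..t, g1 s)) := by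
          apply intervalIntegral.integral_congr
          intro t _
          rw [hx]; dsimp only; ring
      _ = p0 * ∫ t in a..b, g1 t * Real.exp (-∫ s in (0:ℝ)..t, g1 s) :=
          intervalIntegral.integral_const_mul _ _
      _ = x a - x b := by rw [h, hx]; dsimp only; ring
  have hyftc : ∀ a b : ℝ, 0 ≤ a → a ≤ b →
      (∫ t in a..b, g2 t * y t) = y a - y b := by
    intro a b h0a hab
    have h := ftc_exp hg2m hg2mem h0a hab
    calc (∫ t in a..b, g2 t * y t)
        = ∫ t in a..b, (1 - p0) * (g2 t * Real.exp (-∫ s in (0:ℝ)..t, g2 s)) := by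
          apply intervalIntegral.integral_congr
          intro t _
          rw [hy]; dsimp only; ring
      _ = (1 - p0) * ∫ t in a..b, g2 t * Real.exp (-∫ s in (0:ℝ)..t, g2 s) :=
          intervalIntegral.integral_const_mul _ _
      _ = y a - y b := by rw [h, hy]; dsimp only; ring
  -- primitive decomposition
  have hg1int : ∀ t : ℝ, (∫ s in (0:ℝ)..t, g1 s)
      = rho * t + lam * ∫ s in (0:ℝ)..t, α s := by
    intro t
    have : (∫ s in (0:ℝ)..t, g1 s)
        = (∫ s in (0:ℝ)..t, rho) + ∫ s in (0:ℝ)..t, lam * α s := by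
      rw [← intervalIntegral.integral_add intervalIntegrable_const
        ((hαii 0 t).const_mul lam)]
    rw [this, intervalIntegral.integral_const,
      intervalIntegral.integral_const_mul]
    simp only [smul_eq_mul]
    ring
  have hg2int : ∀ t : ℝ, (∫ s in (0:ℝ)..t, g2 s)
      = rho * t + lam * ∫ s in (0:ℝ)..t, (1 - α s) := by
    intro t
    have : (∫ s in (0:ℝ)..t, g2 s)
        = (∫ s in (0:ℝ)..t, rho) + ∫ s in (0:ℝ)..t, lam * (1 - α s) := by
      rw [← intervalIntegral.integral_add intervalIntegrable_const
        ((h1mαii 0 t).const_mul lam)]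
    rw [this, intervalIntegral.integral_const,
      intervalIntegral.integral_const_mul]
    simp only [smul_eq_mul]
    ring
  -- the key identity transported to x, y
  have hkey := key_identity lam T h_lam hT p0 hp0 α hα_meas hα p hp_diff hp_init hp_ode
  have hM1x : ∀ t ∈ Set.Icc (0:ℝ) T, Real.exp (-rho * t) * P t * p t = x t := by
    intro t ht
    have hk := hkey t ht
    have hPt := hP t
    have : P t * p t = p0 * Real.exp (-lam * ∫ s in (0:ℝ)..t, α s) := by
      rw [hPt]; linarith [hk]
    calc Real.exp (-rho * t) * P t * p t
        = Real.exp (-rho * t) * (P t * p t) := by ring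
      _ = Real.exp (-rho * t) * (p0 * Real.exp (-lam * ∫ s in (0:ℝ)..t, α s)) := by
          rw [this]
      _ = x t := by
          rw [hx]; dsimp only
          rw [hg1int t]
          rw [show -(rho * t + lam * ∫ s in (0:ℝ)..t, α s)
            = -rho * t + -lam * ∫ s in (0:ℝ)..t, α s by ring]
          rw [Real.exp_add]
          ring
  have hM1y : ∀ t ∈ Set.Icc (0:ℝ) T, Real.exp (-rho * t) * P t * (1 - p t) = y t := by
    intro t ht
    have hk := hkey t ht
    have hPt := hP t
    have : P t * (1 - p t)
        = (1 - p0) * Real.exp (-lam * ∫ s in (0:ℝ)..t, (1 - α s)) := by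
      linear_combination (1 - p t) * hPt - hk
    calc Real.exp (-rho * t) * P t * (1 - p t)
        = Real.exp (-rho * t) * (P t * (1 - p t)) := by ring
      _ = Real.exp (-rho * t)
          * ((1 - p0) * Real.exp (-lam * ∫ s in (0:ℝ)..t, (1 - α s))) := by rw [this]
      _ = y t := by
          rw [hy]; dsimp only
          rw [hg2int t]
          rw [show -(rho * t + lam * ∫ s in (0:ℝ)..t, (1 - α s))
            = -rho * t + -lam * ∫ s in (0:ℝ)..t, (1 - α s) by ring]
          rw [Real.exp_add]
          ring
  -- the flow function
  set f : ℝ → ℝ := fun t => Real.exp (-rho * t) * P t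
    * (lam * α t * p t * urR + lam * (1 - α t) * (1 - p t) * ulL - c) with hf
  have hPc : Continuous P := by
    have hPeq : P = fun t => p0 * Real.exp (-lam * ∫ s in (0:ℝ)..t, α s)
        + (1 - p0) * Real.exp (-lam * ∫ s in (0:ℝ)..t, (1 - α s)) := funext hP
    rw [hPeq]
    apply Continuous.add
    · exact continuous_const.mul (Real.continuous_exp.comp
        (continuous_const.mul (intervalIntegral.continuous_primitive hαii 0)))
    · exact continuous_const.mul (Real.continuous_exp.comp
        (continuous_const.mul (intervalIntegral.continuous_primitive h1mαii 0)))
  have hpc : Continuous p := hp_diff.continuous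
  have hfii : ∀ a b : ℝ, IntervalIntegrable f volume a b := by
    intro a b
    have hfeq : f = fun t => α t * (Real.exp (-rho * t) * P t
        * (lam * p t * urR - lam * (1 - p t) * ulL))
        + Real.exp (-rho * t) * P t * (lam * (1 - p t) * ulL - c) := by
      funext t
      rw [hf]; dsimp only; ring
    rw [hfeq]
    apply IntervalIntegrable.add
    · apply ii_mul_cont (C := 1) hα_meas
        (fun t => by
          have := (hα t).1; have := (hα t).2
          rw [abs_le]; constructor <;> linarith)
      fun_prop
    · apply Continuous.intervalIntegrable
      fun_prop
  set Cf : ℝ → ℝ := fun t => ∫ s in (0:ℝ)..t, f s with hCf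
  have hCfc : Continuous Cf := intervalIntegral.continuous_primitive hfii 0
  -- pointwise flow identity
  have hM2 : ∀ t ∈ Set.Icc (0:ℝ) T, f t
      = lam * α t * urR * x t + lam * (1 - α t) * ulL * y t - c * (x t + y t) := by
    intro t ht
    have e1 := hM1x t ht
    have e2 := hM1y t ht
    rw [hf]; dsimp only
    linear_combination (lam * α t * urR - c) * e1 + (lam * (1 - α t) * ulL - c) * e2
  -- integrability of the pieces
  have hg1xii : ∀ a b : ℝ, IntervalIntegrable (fun t => g1 t * x t) volume a b :=
    fun a b => ii_mul_cont hg1m hg1abs hxc a b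
  have hg2yii : ∀ a b : ℝ, IntervalIntegrable (fun t => g2 t * y t) volume a b :=
    fun a b => ii_mul_cont hg2m hg2abs hyc a b
  -- difference formula
  have hdiff : ∀ (A B : ℝ) (a b : ℝ), 0 ≤ a → a ≤ b →
      (Cf b + (A * x b + B * y b)) - (Cf a + (A * x a + B * y a))
        = ∫ t in a..b, (f t - A * (g1 t * x t) - B * (g2 t * y t)) := by
    intro A B a b h0a hab
    have hCx : Cf b - Cf a = ∫ t in a..b, f t := by
      have := intervalIntegral.integral_add_adjacent_intervals (hfii 0 a) (hfii a b)
      rw [hCf]; dsimp only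
      linarith
    have hxab := hxftc a b h0a hab
    have hyab := hyftc a b h0a hab
    have hsplit : (∫ t in a..b, (f t - A * (g1 t * x t) - B * (g2 t * y t)))
        = (∫ t in a..b, f t) - A * (∫ t in a..b, g1 t * x t)
          - B * (∫ t in a..b, g2 t * y t) := by
      rw [intervalIntegral.integral_sub (((hfii a b).sub
        (((hg1xii a b).const_mul A)))) ((hg2yii a b).const_mul B),
        intervalIntegral.integral_sub (hfii a b) ((hg1xii a b).const_mul A),
        intervalIntegral.integral_const_mul, intervalIntegral.integral_const_mul]
    rw [hsplit, hxab, hyab]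
    linarith
  -- pointwise sign estimates
  have hra3 : 0 ≤ rho * a3 + c := by
    have h : rho * a3 + c = lam * (rho * urR + c) / (rho + lam) := by
      rw [ha3def]; field_simp; ring
    rw [h]
    apply div_nonneg _ hrl.le
    apply mul_nonneg h_lam.le
    nlinarith
  have hrb3 : 0 ≤ rho * b3 + c := by
    have h : rho * b3 + c = lam * (rho * ulL + c) / (rho + lam) := by
      rw [hb3def]; field_simp; ring
    rw [h]
    apply div_nonneg _ hrl.le
    apply mul_nonneg h_lam.le
    nlinarith
  have s3 : ∀ t ∈ Set.Icc (0:ℝ) T,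
      f t - a3 * (g1 t * x t) - b3 * (g2 t * y t) ≤ 0 := by
    intro t ht
    have hm2 := hM2 t ht
    have ha1 := (hα t).1; have ha2 := (hα t).2
    have hxt := hxnn t; have hyt := hynn t
    have heq : f t - a3 * (g1 t * x t) - b3 * (g2 t * y t)
        = (α t - 1) * (rho * a3 + c) * x t - α t * (rho * b3 + c) * y t := by
      rw [hm2, hg1, hg2]; dsimp only
      linear_combination (-(α t) * x t) * ha3 + (-(1 - α t) * y t) * hb3
    rw [heq]
    have p1 : 0 ≤ (1 - α t) * (rho * a3 + c) * x t :=
      mul_nonneg (mul_nonneg (by linarith) hra3) hxt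
    have p2 : 0 ≤ α t * (rho * b3 + c) * y t :=
      mul_nonneg (mul_nonneg ha1 hrb3) hyt
    nlinarith [p1, p2]
  have s1 : ∀ t ∈ Set.Icc (0:ℝ) T,
      a3 * x t + b3 * y t ≤ urR * x t + urL * y t →
      f t - urR * (g1 t * x t) - urL * (g2 t * y t) ≤ 0 := by
    intro t ht hcond
    have hm2 := hM2 t ht
    have ha1 := (hα t).1; have ha2 := (hα t).2
    have hxt := hxnn t; have hyt := hynn t
    have m0 : (rho + lam) * (a3 * x t + b3 * y t)
        ≤ (rho + lam) * (urR * x t + urL * y t) :=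
      mul_le_mul_of_nonneg_left hcond hrl.le
    have e1 : a3 * (rho + lam) * x t = (lam * urR - c) * x t := by rw [ha3]
    have e2 : b3 * (rho + lam) * y t = (lam * ulL - c) * y t := by rw [hb3]
    have p1 : 0 ≤ lam * α t * y t * (ulL - urL) :=
      mul_nonneg (mul_nonneg (mul_nonneg h_lam.le ha1) hyt) (by linarith)
    rw [hm2, hg1, hg2]; dsimp only
    nlinarith [m0, e1, e2, p1]
  have s2 : ∀ t ∈ Set.Icc (0:ℝ) T,
      a3 * x t + b3 * y t ≤ ulR * x t + ulL * y t →
      f t - ulR * (g1 t * x t) - ulL * (g2 t * y t) ≤ 0 := by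
    intro t ht hcond
    have hm2 := hM2 t ht
    have ha1 := (hα t).1; have ha2 := (hα t).2
    have hxt := hxnn t; have hyt := hynn t
    have m0 : (rho + lam) * (a3 * x t + b3 * y t)
        ≤ (rho + lam) * (ulR * x t + ulL * y t) :=
      mul_le_mul_of_nonneg_left hcond hrl.le
    have e1 : a3 * (rho + lam) * x t = (lam * urR - c) * x t := by rw [ha3]
    have e2 : b3 * (rho + lam) * y t = (lam * ulL - c) * y t := by rw [hb3]
    have p1 : 0 ≤ lam * (1 - α t) * x t * (urR - ulR) :=
      mul_nonneg (mul_nonneg (mul_nonneg h_lam.le (by linarith)) hxt) (by linarith)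
    rw [hm2, hg1, hg2]; dsimp only
    nlinarith [m0, e1, e2, p1]
  -- the three comparison functions
  set H1 : ℝ → ℝ := fun t => Cf t + (urR * x t + urL * y t) with hH1
  set H2 : ℝ → ℝ := fun t => Cf t + (ulR * x t + ulL * y t) with hH2
  set H3 : ℝ → ℝ := fun t => Cf t + (a3 * x t + b3 * y t) with hH3
  have hH1c : Continuous H1 := by
    apply hCfc.add
    exact (continuous_const.mul hxc).add (continuous_const.mul hyc)
  have hH2c : Continuous H2 := by
    apply hCfc.add
    exact (continuous_const.mul hxc).add (continuous_const.mul hyc)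
  have hH3c : Continuous H3 := by
    apply hCfc.add
    exact (continuous_const.mul hxc).add (continuous_const.mul hyc)
  have hm3 : ∀ a b, 0 ≤ a → a ≤ b → b ≤ T → H3 b ≤ H3 a := by
    intro a b h0a hab hbT
    have hd := hdiff a3 b3 a b h0a hab
    have hint : (∫ t in a..b, (f t - a3 * (g1 t * x t) - b3 * (g2 t * y t))) ≤ 0 := by
      rw [intervalIntegral.integral_of_le hab]
      apply MeasureTheory.setIntegral_nonpos_ae measurableSet_Ioc
      apply Filter.Eventually.of_forall
      intro t
      intro htIoc
      exact s3 t ⟨le_trans h0a htIoc.1.le, le_trans htIoc.2 hbT⟩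
    rw [hH3]; dsimp only
    linarith [hd, hint]
  have hm1 : ∀ a b, 0 ≤ a → a ≤ b → b ≤ T →
      (∀ t, a < t → t ≤ b → H3 t < H1 t) → H1 b ≤ H1 a := by
    intro a b h0a hab hbT hcond
    have hd := hdiff urR urL a b h0a hab
    have hint : (∫ t in a..b, (f t - urR * (g1 t * x t) - urL * (g2 t * y t))) ≤ 0 := by
      rw [intervalIntegral.integral_of_le hab]
      apply MeasureTheory.setIntegral_nonpos_ae measurableSet_Ioc
      apply Filter.Eventually.of_forall
      intro t
      intro htIoc
      apply s1 t ⟨le_trans h0a htIoc.1.le, le_trans htIoc.2 hbT⟩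
      have := hcond t htIoc.1 htIoc.2
      rw [hH3, hH1] at this
      dsimp only at this
      linarith
    rw [hH1]; dsimp only
    linarith [hd, hint]
  have hm2' : ∀ a b, 0 ≤ a → a ≤ b → b ≤ T →
      (∀ t, a < t → t ≤ b → H3 t < H2 t) → H2 b ≤ H2 a := by
    intro a b h0a hab hbT hcond
    have hd := hdiff ulR ulL a b h0a hab
    have hint : (∫ t in a..b, (f t - ulR * (g1 t * x t) - ulL * (g2 t * y t))) ≤ 0 := by
      rw [intervalIntegral.integral_of_le hab]
      apply MeasureTheory.setIntegral_nonpos_ae measurableSet_Ioc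
      apply Filter.Eventually.of_forall
      intro t
      intro htIoc
      apply s2 t ⟨le_trans h0a htIoc.1.le, le_trans htIoc.2 hbT⟩
      have := hcond t htIoc.1 htIoc.2
      rw [hH3, hH2] at this
      dsimp only at this
      linarith
    rw [hH2]; dsimp only
    linarith [hd, hint]
  have hmax1 : H1 T ≤ max (H1 0) (H3 0) := aux_max hT hH1c hH3c hm3 hm1
  have hmax2 : H2 T ≤ max (H2 0) (H3 0) := aux_max hT hH2c hH3c hm3 hm2'
  -- values at 0
  have hCf0 : Cf 0 = 0 := by rw [hCf]; dsimp only; exact intervalIntegral.integral_same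
  have hx0 : x 0 = p0 := by
    rw [hx]; dsimp only; rw [intervalIntegral.integral_same]; simp
  have hy0 : y 0 = 1 - p0 := by
    rw [hy]; dsimp only; rw [intervalIntegral.integral_same]; simp
  have hH10 : H1 0 = Ur urR ulR urL ulL lam rho c p0 := by
    rw [hH1]; dsimp only; rw [hCf0, hx0, hy0, Ur]; ring
  have hH20 : H2 0 = Ul urR ulR urL ulL lam rho c p0 := by
    rw [hH2]; dsimp only; rw [hCf0, hx0, hy0, Ul]; ring
  have hH30 : H3 0 = UFA urR ulR urL ulL lam rho c p0 := by
    rw [hH3]; dsimp only; rw [hCf0, hx0, hy0, UFA, ha3def, hb3def]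
    field_simp
    ring
  -- terminal value
  have hTmem : T ∈ Set.Icc (0:ℝ) T := ⟨hT, le_rfl⟩
  have hterm : Real.exp (-rho * T) * P T * U urR ulR urL ulL lam rho c (p T)
      = max (urR * x T + urL * y T) (ulR * x T + ulL * y T) := by
    have hEPnn : 0 ≤ Real.exp (-rho * T) * P T := by
      rw [hP T]
      have := hp0.1; have := hp0.2
      have e1 := (Real.exp_pos (-lam * ∫ s in (0:ℝ)..T, α s)).le
      have e2 := (Real.exp_pos (-lam * ∫ s in (0:ℝ)..T, (1 - α s))).le
      have e3 := (Real.exp_pos (-rho * T)).le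
      have : 0 ≤ p0 * Real.exp (-lam * ∫ s in (0:ℝ)..T, α s)
          + (1 - p0) * Real.exp (-lam * ∫ s in (0:ℝ)..T, (1 - α s)) := by
        apply add_nonneg (mul_nonneg (by linarith) e1) (mul_nonneg (by linarith) e2)
      exact mul_nonneg e3 this
    rw [U, mul_max_of_nonneg _ _ hEPnn]
    have t1 : Real.exp (-rho * T) * P T * Ur urR ulR urL ulL lam rho c (p T)
        = urR * x T + urL * y T := by
      rw [Ur]
      linear_combination urR * hM1x T hTmem + urL * hM1y T hTmem
    have t2 : Real.exp (-rho * T) * P T * Ul urR ulR urL ulL lam rho c (p T)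
        = ulR * x T + ulL * y T := by
      rw [Ul]
      linear_combination ulR * hM1x T hTmem + ulL * hM1y T hTmem
    rw [t1, t2]
  -- final assembly
  rw [hterm]
  have hCT : (∫ t in (0:ℝ)..T,
      Real.exp (-rho * t) * P t
        * (lam * α t * p t * urR + lam * (1 - α t) * (1 - p t) * ulL - c)) = Cf T := by
    rw [hCf]
  rw [hCT]
  have hfin1 : Cf T + (urR * x T + urL * y T)
      ≤ max (U urR ulR urL ulL lam rho c p0) (UFA urR ulR urL ulL lam rho c p0) := by
    have : H1 T ≤ max (H1 0) (H3 0) := hmax1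
    rw [hH10, hH30] at this
    rw [hH1] at this; dsimp only at this
    apply le_trans this
    apply max_le_max _ le_rfl
    rw [U]
    exact le_max_left _ _
  have hfin2 : Cf T + (ulR * x T + ulL * y T)
      ≤ max (U urR ulR urL ulL lam rho c p0) (UFA urR ulR urL ulL lam rho c p0) := by
    have : H2 T ≤ max (H2 0) (H3 0) := hmax2
    rw [hH20, hH30] at this
    rw [hH2] at this; dsimp only at this
    apply le_trans this
    apply max_le_max _ le_rfl
    rw [U]
    exact le_max_right _ _
  rcases max_cases (urR * x T + urL * y T) (ulR * x T + ulL * y T) with ⟨hmx, -⟩ | ⟨hmx, -⟩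
  · rw [hmx]; exact hfin1
  · rw [hmx]; exact hfin2
end
end

section
/- U-shape of the coefficient functions and lower bound in the model with diminishing returns to attention: assume ρ > 0 and c ≥ 0, and let ū > 0. Then for every λ ∈ (0,1): A′(λ) > 0 if and only if λ > γ, and B′(λ) < 0 if and only if λ > γ. Consequently, for every λ ∈ [0,1], A(λ)·ū − B(λ)·c ≥ (γ·ū − c)/(ρ + γ), with equality if and only if λ = γ (provided c > 0 or ū > 0). -/
set_option linter.unusedVariables false

noncomputable section

/-- Coefficient `A(λ)` in the diminishing-returns model. -/
def Acoef (Γ : ℝ → ℝ) (ρ l : ℝ) : ℝ :=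
  (Γ l - deriv Γ l * l) / (Γ l - deriv Γ l * l + ρ * (1 - deriv Γ l))

/-- Coefficient `B(λ)` in the diminishing-returns model. -/
def Bcoef (Γ : ℝ → ℝ) (ρ l : ℝ) : ℝ :=
  (1 - deriv Γ l) / (Γ l - deriv Γ l * l + ρ * (1 - deriv Γ l))

/-- U-shape of the coefficient functions `A`, `B`, and the lower bound
`A(λ)ū − B(λ)c ≥ (γū − c)/(ρ+γ)` with equality exactly at `λ = γ`. -/
theorem AB_ushape_and_stationary_bound
    (Γ : ℝ → ℝ) (γ ρ c ubar : ℝ)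
    (hΓ_smooth : ContDiff ℝ 2 Γ)
    (hΓ_maps : ∀ x ∈ Set.Icc (0 : ℝ) 1, Γ x ∈ Set.Icc (0 : ℝ) 1)
    (hΓ_anti : StrictAntiOn Γ (Set.Icc (0 : ℝ) 1))
    (hΓ_concave : ∀ x ∈ Set.Icc (0 : ℝ) 1, deriv (deriv Γ) x < 0)
    (hΓ0 : Γ 0 = 1) (hΓ1 : Γ 1 = 0)
    (hγ_mem : γ ∈ Set.Ioo (0 : ℝ) 1) (hγ_fix : Γ γ = γ)
    (hγ_uniq : ∀ x ∈ Set.Icc (0 : ℝ) 1, Γ x = x → x = γ)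
    (hγ_slope : deriv Γ γ = -1)
    (h_rho : 0 < ρ) (h_c : 0 ≤ c) (h_ubar : 0 < ubar) :
    (∀ l ∈ Set.Ioo (0 : ℝ) 1,
      (0 < deriv (Acoef Γ ρ) l ↔ γ < l) ∧ (deriv (Bcoef Γ ρ) l < 0 ↔ γ < l))
    ∧ ∀ l ∈ Set.Icc (0 : ℝ) 1,
        Acoef Γ ρ l * ubar - Bcoef Γ ρ l * c ≥ (γ * ubar - c) / (ρ + γ)
        ∧ (Acoef Γ ρ l * ubar - Bcoef Γ ρ l * c = (γ * ubar - c) / (ρ + γ) ↔ l = γ) := by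
  -- basic smoothness facts
  have h2 : ContDiff ℝ (1 + 1) Γ := by exact_mod_cast hΓ_smooth
  have h21 := contDiff_succ_iff_deriv.mp h2
  have hΓd : Differentiable ℝ Γ := h21.1
  have h1d := contDiff_one_iff_deriv.mp h21.2.2
  have hΓ'd : Differentiable ℝ (deriv Γ) := h1d.1
  have hΓ''c : Continuous (deriv (deriv Γ)) := h1d.2
  have hΓ'c : Continuous (deriv Γ) := hΓ'd.continuous
  have hγI : γ ∈ Set.Icc (0 : ℝ) 1 := ⟨hγ_mem.1.le, hγ_mem.2.le⟩
  -- Γ' is strictly decreasing on [0,1]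
  have hΓ'anti : StrictAntiOn (deriv Γ) (Set.Icc (0 : ℝ) 1) := by
    apply strictAntiOn_of_deriv_neg (convex_Icc 0 1) hΓ'c.continuousOn
    intro x hx
    rw [interior_Icc] at hx
    exact hΓ_concave x ⟨hx.1.le, hx.2.le⟩
  -- Γ' ≤ 0 on (0,1]
  have hΓ'neg : ∀ l : ℝ, 0 < l → l ≤ 1 → deriv Γ l < 0 := by
    intro l hl0 hl1
    obtain ⟨ξ, hξ, hξd⟩ := exists_hasDerivAt_eq_slope Γ (deriv Γ)
      (show l / 2 < l by linarith) (hΓd.continuous.continuousOn)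
      (fun x _ => (hΓd x).hasDerivAt)
    have hmem1 : l / 2 ∈ Set.Icc (0 : ℝ) 1 := ⟨by linarith, by linarith⟩
    have hmem2 : l ∈ Set.Icc (0 : ℝ) 1 := ⟨by linarith, hl1⟩
    have hΓlt : Γ l < Γ (l / 2) := hΓ_anti hmem1 hmem2 (by linarith)
    have hξneg : deriv Γ ξ < 0 := by
      rw [hξd]
      apply div_neg_of_neg_of_pos <;> linarith
    have hξmem : ξ ∈ Set.Icc (0 : ℝ) 1 := ⟨by linarith [hξ.1], by linarith [hξ.2]⟩
    have := hΓ'anti hξmem hmem2 hξ.2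
    linarith
  have hΓ'le : ∀ l ∈ Set.Icc (0 : ℝ) 1, deriv Γ l ≤ 0 := by
    intro l hl
    rcases eq_or_lt_of_le hl.1 with h | h
    · -- l = 0 : use continuity
      subst h
      have ht : Filter.Tendsto (deriv Γ) (nhdsWithin 0 (Set.Ioi 0)) (nhds (deriv Γ 0)) :=
        (hΓ'c.continuousAt).continuousWithinAt.tendsto
      refine le_of_tendsto ht ?_
      filter_upwards [Ioo_mem_nhdsGT_of_mem (Set.mem_Ico.mpr ⟨le_refl (0:ℝ), one_pos⟩)] with x hx
      exact (hΓ'neg x hx.1 hx.2.le).le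
    · exact (hΓ'neg l h hl.2).le
  -- denominator positivity
  have hDpos : ∀ l ∈ Set.Icc (0 : ℝ) 1,
      0 < Γ l - deriv Γ l * l + ρ * (1 - deriv Γ l) := by
    intro l hl
    have h1 : 0 ≤ Γ l := (hΓ_maps l hl).1
    have h2 : deriv Γ l ≤ 0 := hΓ'le l hl
    have h3 : 0 ≤ l := hl.1
    nlinarith [mul_nonneg (neg_nonneg.mpr h2) h3]
  -- derivative of A
  have hAder : ∀ l ∈ Set.Icc (0 : ℝ) 1, HasDerivAt (Acoef Γ ρ)
      (deriv (deriv Γ) l * ρ * (Γ l - l)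
        / (Γ l - deriv Γ l * l + ρ * (1 - deriv Γ l)) ^ 2) l := by
    intro l hl
    have hD0 := (hDpos l hl).ne'
    have hN : HasDerivAt (fun x => Γ x - deriv Γ x * x)
        (deriv Γ l - (deriv (deriv Γ) l * l + deriv Γ l * 1)) l :=
      ((hΓd l).hasDerivAt).sub (((hΓ'd l).hasDerivAt).mul (hasDerivAt_id l))
    have hDd : HasDerivAt (fun x => Γ x - deriv Γ x * x + ρ * (1 - deriv Γ x))
        (deriv Γ l - (deriv (deriv Γ) l * l + deriv Γ l * 1)
          + ρ * (0 - deriv (deriv Γ) l)) l :=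
      hN.add (((hasDerivAt_const l (1:ℝ)).sub ((hΓ'd l).hasDerivAt)).const_mul ρ)
    have h : HasDerivAt (Acoef Γ ρ) _ l := hN.div hDd hD0
    convert h using 1
    field_simp
    ring
  -- derivative of B
  have hBder : ∀ l ∈ Set.Icc (0 : ℝ) 1, HasDerivAt (Bcoef Γ ρ)
      (deriv (deriv Γ) l * (l - Γ l)
        / (Γ l - deriv Γ l * l + ρ * (1 - deriv Γ l)) ^ 2) l := by
    intro l hl
    have hD0 := (hDpos l hl).ne'
    have hN : HasDerivAt (fun x => (1:ℝ) - deriv Γ x) (0 - deriv (deriv Γ) l) l :=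
      (hasDerivAt_const l (1:ℝ)).sub ((hΓ'd l).hasDerivAt)
    have hN2 : HasDerivAt (fun x => Γ x - deriv Γ x * x)
        (deriv Γ l - (deriv (deriv Γ) l * l + deriv Γ l * 1)) l :=
      ((hΓd l).hasDerivAt).sub (((hΓ'd l).hasDerivAt).mul (hasDerivAt_id l))
    have hDd : HasDerivAt (fun x => Γ x - deriv Γ x * x + ρ * (1 - deriv Γ x))
        (deriv Γ l - (deriv (deriv Γ) l * l + deriv Γ l * 1)
          + ρ * (0 - deriv (deriv Γ) l)) l :=
      hN2.add (hN.const_mul ρ)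
    have h : HasDerivAt (Bcoef Γ ρ) _ l := hN.div hDd hD0
    convert h using 1
    field_simp
    ring
  -- derivative of f = A·ū − B·c
  have hfder : ∀ l ∈ Set.Icc (0 : ℝ) 1,
      HasDerivAt (fun x => Acoef Γ ρ x * ubar - Bcoef Γ ρ x * c)
        (deriv (deriv Γ) l * (Γ l - l) * (ρ * ubar + c)
          / (Γ l - deriv Γ l * l + ρ * (1 - deriv Γ l)) ^ 2) l := by
    intro l hl
    have hD0 := (hDpos l hl).ne'
    have h : HasDerivAt (fun x => Acoef Γ ρ x * ubar - Bcoef Γ ρ x * c) _ l :=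
      ((hAder l hl).mul_const ubar).sub ((hBder l hl).mul_const c)
    convert h using 1
    field_simp
    ring
  -- sign of Γ l − l
  have hgAnti : StrictAntiOn (fun x => Γ x - x) (Set.Icc (0 : ℝ) 1) := by
    intro a ha b hb hab
    have := hΓ_anti ha hb hab
    simp only
    linarith
  have hsign1 : ∀ l ∈ Set.Icc (0 : ℝ) 1, l < γ → 0 < Γ l - l := by
    intro l hl h
    have := hgAnti hl hγI h
    simp only at this
    rw [hγ_fix] at this
    linarith
  have hsign2 : ∀ l ∈ Set.Icc (0 : ℝ) 1, γ < l → Γ l - l < 0 := by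
    intro l hl h
    have := hgAnti hγI hl h
    simp only at this
    rw [hγ_fix] at this
    linarith
  have hub : 0 < ρ * ubar + c := by nlinarith
  constructor
  · -- part 1 : U-shape of A and B
    intro l hl
    have hlI : l ∈ Set.Icc (0 : ℝ) 1 := ⟨hl.1.le, hl.2.le⟩
    have hΓ'' : deriv (deriv Γ) l < 0 := hΓ_concave l hlI
    have hD := hDpos l hlI
    have hD2 : 0 < (Γ l - deriv Γ l * l + ρ * (1 - deriv Γ l)) ^ 2 := by positivity
    have hdA : deriv (Acoef Γ ρ) l = deriv (deriv Γ) l * ρ * (Γ l - l)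
        / (Γ l - deriv Γ l * l + ρ * (1 - deriv Γ l)) ^ 2 := (hAder l hlI).deriv
    have hdB : deriv (Bcoef Γ ρ) l = deriv (deriv Γ) l * (l - Γ l)
        / (Γ l - deriv Γ l * l + ρ * (1 - deriv Γ l)) ^ 2 := (hBder l hlI).deriv
    constructor
    · rw [hdA]
      constructor
      · intro h
        by_contra hle
        push_neg at hle
        rcases eq_or_lt_of_le hle with he | hlt
        · rw [he, hγ_fix] at h
          simp at h
        · have hs := hsign1 l hlI hlt
          have hnum : deriv (deriv Γ) l * ρ * (Γ l - l) < 0 := by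
            nlinarith [mul_pos (neg_pos.mpr hΓ'') (mul_pos h_rho hs)]
          have := div_neg_of_neg_of_pos hnum hD2
          linarith
      · intro h
        have hs := hsign2 l hlI h
        have hnum : 0 < deriv (deriv Γ) l * ρ * (Γ l - l) := by
          nlinarith [mul_pos (neg_pos.mpr hΓ'') (mul_pos h_rho (neg_pos.mpr hs))]
        exact div_pos hnum hD2
    · rw [hdB]
      constructor
      · intro h
        by_contra hle
        push_neg at hle
        rcases eq_or_lt_of_le hle with he | hlt
        · rw [he, hγ_fix] at h
          simp at h
        · have hs := hsign1 l hlI hlt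
          have hnum : 0 < deriv (deriv Γ) l * (l - Γ l) := by
            nlinarith [mul_pos (neg_pos.mpr hΓ'') hs]
          have := div_pos hnum hD2
          linarith
      · intro h
        have hs := hsign2 l hlI h
        have hnum : deriv (deriv Γ) l * (l - Γ l) < 0 := by
          nlinarith [mul_pos (neg_pos.mpr hΓ'') (neg_pos.mpr hs)]
        exact div_neg_of_neg_of_pos hnum hD2
  · -- part 2 : the bound
    have hργ : (0:ℝ) < ρ + γ := by linarith [hγ_mem.1]
    -- value at γ
    have hfγ : Acoef Γ ρ γ * ubar - Bcoef Γ ρ γ * c = (γ * ubar - c) / (ρ + γ) := by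
      unfold Acoef Bcoef
      rw [hγ_fix, hγ_slope]
      rw [show γ - (-1 : ℝ) * γ + ρ * (1 - (-1)) = 2 * (ρ + γ) by ring]
      have h1 : (ρ + γ) ≠ 0 := hργ.ne'
      field_simp
      ring
    -- continuity of f on [0,1]
    have hfc : ContinuousOn (fun x => Acoef Γ ρ x * ubar - Bcoef Γ ρ x * c)
        (Set.Icc (0 : ℝ) 1) :=
      fun x hx => ((hfder x hx).continuousAt).continuousWithinAt
    -- f strictly decreasing on [0,γ]
    have hanti : StrictAntiOn (fun x => Acoef Γ ρ x * ubar - Bcoef Γ ρ x * c)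
        (Set.Icc (0 : ℝ) γ) := by
      apply strictAntiOn_of_deriv_neg (convex_Icc 0 γ)
        (hfc.mono (Set.Icc_subset_Icc le_rfl hγ_mem.2.le))
      intro x hx
      rw [interior_Icc] at hx
      have hxI : x ∈ Set.Icc (0 : ℝ) 1 := ⟨hx.1.le, by linarith [hγ_mem.2, hx.2]⟩
      rw [(hfder x hxI).deriv]
      have hΓ'' : deriv (deriv Γ) x < 0 := hΓ_concave x hxI
      have hs : 0 < Γ x - x := hsign1 x hxI hx.2
      have hD2 : 0 < (Γ x - deriv Γ x * x + ρ * (1 - deriv Γ x)) ^ 2 := by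
        have := hDpos x hxI; positivity
      apply div_neg_of_neg_of_pos _ hD2
      nlinarith [mul_pos (neg_pos.mpr hΓ'') (mul_pos hs hub)]
    -- f strictly increasing on [γ,1]
    have hmono : StrictMonoOn (fun x => Acoef Γ ρ x * ubar - Bcoef Γ ρ x * c)
        (Set.Icc γ (1 : ℝ)) := by
      apply strictMonoOn_of_deriv_pos (convex_Icc γ 1)
        (hfc.mono (Set.Icc_subset_Icc hγ_mem.1.le le_rfl))
      intro x hx
      rw [interior_Icc] at hx
      have hxI : x ∈ Set.Icc (0 : ℝ) 1 := ⟨by linarith [hγ_mem.1, hx.1], hx.2.le⟩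
      rw [(hfder x hxI).deriv]
      have hΓ'' : deriv (deriv Γ) x < 0 := hΓ_concave x hxI
      have hs : Γ x - x < 0 := hsign2 x hxI hx.1
      have hD2 : 0 < (Γ x - deriv Γ x * x + ρ * (1 - deriv Γ x)) ^ 2 := by
        have := hDpos x hxI; positivity
      apply div_pos _ hD2
      nlinarith [mul_pos (neg_pos.mpr hΓ'') (neg_pos.mpr hs)]
    intro l hl
    rcases lt_trichotomy l γ with h | h | h
    · have hlt : Acoef Γ ρ γ * ubar - Bcoef Γ ρ γ * c
          < Acoef Γ ρ l * ubar - Bcoef Γ ρ l * c :=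
        hanti ⟨hl.1, h.le⟩ ⟨hγ_mem.1.le, le_refl γ⟩ h
      rw [hfγ] at hlt
      refine ⟨hlt.le, ?_, fun he => absurd he h.ne⟩
      intro he
      rw [he] at hlt
      exact absurd hlt (lt_irrefl _)
    · subst h
      exact ⟨le_of_eq hfγ.symm, fun _ => rfl, fun _ => hfγ⟩
    · have hlt : Acoef Γ ρ γ * ubar - Bcoef Γ ρ γ * c
          < Acoef Γ ρ l * ubar - Bcoef Γ ρ l * c :=
        hmono ⟨le_refl γ, hγ_mem.2.le⟩ ⟨h.le, hl.2⟩ h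
      rw [hfγ] at hlt
      refine ⟨hlt.le, ?_, fun he => absurd he h.ne'⟩
      intro he
      rw [he] at hlt
      exact absurd hlt (lt_irrefl _)
end
end
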